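/- With the Bellman recursion V(i,1,y) = min_{y'} l_{iN}(y,y') and V(i,m,y) = min_{i'∈{i+1,...,N-m+1}} min_{y'} (l_{ii'}(y,y') + V(i', m-1, y')), if every l_{ii'}(y,y') is a positive definite quadratic form in (y,y') plus an affine term, then for every i and m with the recursion well-defined, y ↦ V(i,m,y) is the pointwise minimum of a finite set of quadratic polynomials in y, each with positive leading coefficient. -/

import Mathlib

open Matrix

/-- The value function defined by the Bellman recursion:
`V i 1 y = min_{y'} l i N y y'` and, for `m ≥ 2`,
`V i m y = min_{i < i' ≤ N - m + 1} min_{y'} (l i i' y y' + V i' (m-1) y')`. -/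
noncomputable def bellmanV (N : ℕ) (l : ℕ → ℕ → ℝ → ℝ → ℝ) : ℕ → ℕ → ℝ → ℝ
  | _, 0, _ => 0
  | i, 1, y => sInf {v : ℝ | ∃ y' : ℝ, v = l i N y y'}
  | i, (m + 2), y =>
      sInf {v : ℝ | ∃ i' : ℕ, i < i' ∧ i' ≤ N - (m + 2) + 1 ∧
        ∃ y' : ℝ, v = l i i' y y' + bellmanV N l i' (m + 1) y'}

private lemma quad_isLeast (c d e : ℝ) (hc : 0 < c) :
    IsLeast {v : ℝ | ∃ t : ℝ, v = c * t ^ 2 + d * t + e} (e - d ^ 2 / (4 * c)) := by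
  constructor
  · exact ⟨-d / (2 * c), by field_simp; ring⟩
  · rintro v ⟨t, rfl⟩
    have h := mul_nonneg hc.le (sq_nonneg (t + d / (2 * c)))
    have hkey : c * (t + d / (2*c))^2 = c*t^2 + d*t + d^2/(4*c) := by field_simp; ring
    nlinarith [h, hkey]

private lemma reduce_eq (a b c q0 q1 r y : ℝ) (hc : 0 < c) :
    (a*y^2 + q0*y + r) - (2*b*y + q1)^2/(4*c)
      = (a - b^2/c)*y^2 + (q0 - b*q1/c)*y + (r - q1^2/(4*c)) := by
  field_simp; ring

private lemma posdef_facts (P : Matrix (Fin 2) (Fin 2) ℝ) (hP : P.PosDef) :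
    0 < P 0 0 ∧ 0 < P 1 1 ∧ P 1 0 = P 0 1 ∧ 0 < P 0 0 * P 1 1 - P 0 1 * P 0 1 := by
  have h00 := hP.dotProduct_mulVec_pos (x := (![1,0] : Fin 2 → ℝ)) (by intro h; simpa using congrFun h 0)
  have h11 := hP.dotProduct_mulVec_pos (x := (![0,1] : Fin 2 → ℝ)) (by intro h; simpa using congrFun h 1)
  have hsym : P 1 0 = P 0 1 := (Matrix.IsHermitian.apply hP.1 1 0).symm
  have hdet := hP.det_pos
  rw [Matrix.det_fin_two] at hdet
  simp [dotProduct, mulVec, Fin.sum_univ_two] at h00 h11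
  refine ⟨h00, h11, hsym, by rw [hsym] at hdet; linarith⟩

/-- If every transition cost is a positive definite quadratic form plus affine
terms, then every value function `y ↦ V i m y` is the pointwise minimum of a
finite nonempty family of quadratic polynomials with positive leading
coefficients. -/
theorem stmt_13 (N : ℕ) (hN : 0 < N) (l : ℕ → ℕ → ℝ → ℝ → ℝ)
    (hquad : ∀ i i' : ℕ, i < i' → i' ≤ N →
      ∃ (P : Matrix (Fin 2) (Fin 2) ℝ) (q : Fin 2 → ℝ) (r : ℝ), P.PosDef ∧
        ∀ y y' : ℝ, l i i' y y' = ![y, y'] ⬝ᵥ P *ᵥ ![y, y'] + q ⬝ᵥ ![y, y'] + r) :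
    ∀ i m : ℕ, 1 ≤ m → i + m ≤ N →
      ∃ (S : Finset (ℝ × ℝ × ℝ)) (hS : S.Nonempty),
        (∀ x ∈ S, 0 < x.1) ∧
        ∀ y : ℝ, bellmanV N l i m y =
          S.inf' hS fun x => x.1 * y ^ 2 + x.2.1 * y + x.2.2 := by
  suffices H : ∀ m i : ℕ, 1 ≤ m → i + m ≤ N →
      ∃ (S : Finset (ℝ × ℝ × ℝ)) (hS : S.Nonempty),
        (∀ x ∈ S, 0 < x.1) ∧
        ∀ y : ℝ, bellmanV N l i m y =
          S.inf' hS fun x => x.1 * y ^ 2 + x.2.1 * y + x.2.2 by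
    exact fun i m => H m i
  intro m
  induction m using Nat.twoStepInduction with
  | zero => intro i h; omega
  | one =>
    intro i _ hsum
    obtain ⟨P, q, r, hP, hl⟩ := hquad i N (by omega) le_rfl
    obtain ⟨ha, hc, hsym, hdet⟩ := posdef_facts P hP
    set a := P 0 0 with ha'
    set b := P 0 1 with hb'
    set c := P 1 1 with hc'
    have hl' : ∀ y y' : ℝ, l i N y y'
        = c*y'^2 + (2*b*y + q 1)*y' + (a*y^2 + q 0*y + r) := by
      intro y y'
      rw [hl]
      simp [dotProduct, mulVec, Fin.sum_univ_two, hsym, ← ha', ← hb', ← hc']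
      ring
    refine ⟨{(a - b^2/c, q 0 - b*(q 1)/c, r - (q 1)^2/(4*c))},
      Finset.singleton_nonempty _, ?_, ?_⟩
    · intro x hx
      rw [Finset.mem_singleton] at hx
      subst hx
      show 0 < a - b^2/c
      rw [sub_pos, div_lt_iff₀ hc, sq]
      linarith
    · intro y
      rw [Finset.inf'_singleton]
      have hset : {v : ℝ | ∃ y' : ℝ, v = l i N y y'}
          = {v : ℝ | ∃ t : ℝ, v = c*t^2 + (2*b*y + q 1)*t + (a*y^2 + q 0*y + r)} := by
        ext v
        simp only [Set.mem_setOf_eq, hl']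
      show sInf {v : ℝ | ∃ y' : ℝ, v = l i N y y'} = _
      rw [hset, (quad_isLeast _ _ _ hc).csInf_eq,
        reduce_eq a b c (q 0) (q 1) r y hc]
  | more m _ ih2 =>
    intro i _ hsum
    set R := Finset.Ioc i (N - (m+2) + 1) with hR
    have key : ∀ i' ∈ R,
        ∃ (a b c q0 q1 r : ℝ) (S : Finset (ℝ×ℝ×ℝ)),
          0 < a ∧ 0 < c ∧ 0 < a*c - b*b ∧
          (∀ y y' : ℝ, l i i' y y' = c*y'^2 + (2*b*y + q1)*y' + (a*y^2 + q0*y + r)) ∧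
          S.Nonempty ∧ (∀ x ∈ S, 0 < x.1) ∧
          (∀ (y' : ℝ), ∀ x ∈ S, bellmanV N l i' (m+1) y' ≤ x.1*y'^2 + x.2.1*y' + x.2.2) ∧
          (∀ y' : ℝ, ∃ x ∈ S, bellmanV N l i' (m+1) y' = x.1*y'^2 + x.2.1*y' + x.2.2) := by
      intro i' hi'
      rw [hR, Finset.mem_Ioc] at hi'
      obtain ⟨hi1, hi2⟩ := hi'
      obtain ⟨P, q, r, hP, hl⟩ := hquad i i' hi1 (by omega)
      obtain ⟨ha, hc, hsym, hdet⟩ := posdef_facts P hP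
      obtain ⟨S, hS, hpos, hV⟩ := ih2 i' (by omega) (by omega)
      refine ⟨P 0 0, P 0 1, P 1 1, q 0, q 1, r, S, ha, hc, ?_, ?_, hS, hpos, ?_, ?_⟩
      · linarith
      · intro y y'
        rw [hl]
        simp [dotProduct, mulVec, Fin.sum_univ_two, hsym]
        ring
      · intro y' x hx
        rw [hV y']
        exact Finset.inf'_le _ hx
      · intro y'
        rw [hV y']
        exact Finset.exists_mem_eq_inf' hS
          (fun x => x.1 * y' ^ 2 + x.2.1 * y' + x.2.2)
    choose a b c q0 q1 r S hA hC hDet hl' hSne hSpos hVle hVeq using key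
    have hRne : R.Nonempty := Finset.nonempty_Ioc.mpr (by omega)
    set g : (p : {x // x ∈ R}) → ℝ×ℝ×ℝ → ℝ×ℝ×ℝ := fun p z =>
      (a p.1 p.2 - (b p.1 p.2)^2/(c p.1 p.2 + z.1),
       q0 p.1 p.2 - (b p.1 p.2)*(q1 p.1 p.2 + z.2.1)/(c p.1 p.2 + z.1),
       (r p.1 p.2 + z.2.2) - (q1 p.1 p.2 + z.2.1)^2/(4*(c p.1 p.2 + z.1))) with hg
    set T : Finset (ℝ×ℝ×ℝ) :=
      R.attach.biUnion (fun p => (S p.1 p.2).image (g p)) with hTdef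
    have hT : T.Nonempty := by
      obtain ⟨i'0, hi'0⟩ := hRne
      obtain ⟨z0, hz0⟩ := hSne i'0 hi'0
      exact ⟨g ⟨i'0, hi'0⟩ z0, Finset.mem_biUnion.mpr
        ⟨⟨i'0, hi'0⟩, Finset.mem_attach _ _, Finset.mem_image_of_mem _ hz0⟩⟩
    have hTpos : ∀ x ∈ T, 0 < x.1 := by
      intro x hx
      rw [hTdef, Finset.mem_biUnion] at hx
      obtain ⟨p, -, hx⟩ := hx
      rw [Finset.mem_image] at hx
      obtain ⟨z, hz, rfl⟩ := hx
      have hz1 : 0 < z.1 := hSpos p.1 p.2 z hz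
      have hc' : 0 < c p.1 p.2 + z.1 := by linarith [hC p.1 p.2]
      show 0 < a p.1 p.2 - (b p.1 p.2)^2/(c p.1 p.2 + z.1)
      rw [sub_pos, div_lt_iff₀ hc', sq]
      have := hDet p.1 p.2
      have := hA p.1 p.2
      nlinarith
    refine ⟨T, hT, hTpos, ?_⟩
    intro y
    set M := T.inf' hT (fun x => x.1 * y ^ 2 + x.2.1 * y + x.2.2) with hM
    show sInf {v : ℝ | ∃ i' : ℕ, i < i' ∧ i' ≤ N - (m + 2) + 1 ∧
        ∃ y' : ℝ, v = l i i' y y' + bellmanV N l i' (m + 1) y'} = M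
    have hlb : ∀ v ∈ {v : ℝ | ∃ i' : ℕ, i < i' ∧ i' ≤ N - (m + 2) + 1 ∧
        ∃ y' : ℝ, v = l i i' y y' + bellmanV N l i' (m + 1) y'}, M ≤ v := by
      rintro v ⟨i', hi1, hi2, y', rfl⟩
      have hiR : i' ∈ R := Finset.mem_Ioc.mpr ⟨hi1, hi2⟩
      obtain ⟨z, hz, hVz⟩ := hVeq i' hiR y'
      have hz1 : 0 < z.1 := hSpos i' hiR z hz
      have hc' : 0 < c i' hiR + z.1 := by linarith [hC i' hiR]
      have hform : l i i' y y' + bellmanV N l i' (m+1) y'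
          = (c i' hiR + z.1)*y'^2 + (2*(b i' hiR)*y + (q1 i' hiR + z.2.1))*y'
            + ((a i' hiR)*y^2 + (q0 i' hiR)*y + (r i' hiR + z.2.2)) := by
        rw [hVz, hl' i' hiR y y']; ring
      rw [hform]
      have hq := quad_isLeast (c i' hiR + z.1) (2*(b i' hiR)*y + (q1 i' hiR + z.2.1))
        ((a i' hiR)*y^2 + (q0 i' hiR)*y + (r i' hiR + z.2.2)) hc'
      have h2 := hq.2 ⟨y', rfl⟩
      have hmemT : g ⟨i', hiR⟩ z ∈ T :=
        Finset.mem_biUnion.mpr ⟨⟨i', hiR⟩, Finset.mem_attach _ _,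
          Finset.mem_image_of_mem _ hz⟩
      have h3 : M ≤ ((a i' hiR)*y^2 + (q0 i' hiR)*y + (r i' hiR + z.2.2))
          - (2*(b i' hiR)*y + (q1 i' hiR + z.2.1))^2/(4*(c i' hiR + z.1)) := by
        rw [reduce_eq _ _ _ _ _ _ y hc']
        exact Finset.inf'_le _ hmemT
      linarith
    refine IsLeast.csInf_eq ⟨?_, hlb⟩
    obtain ⟨x, hxT, hxe⟩ := Finset.exists_mem_eq_inf' hT
      (fun x => x.1 * y ^ 2 + x.2.1 * y + x.2.2)
    rw [hTdef, Finset.mem_biUnion] at hxT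
    obtain ⟨p, -, hxT⟩ := hxT
    rw [Finset.mem_image] at hxT
    obtain ⟨z, hz, rfl⟩ := hxT
    obtain ⟨i', hiR⟩ := p
    obtain ⟨hi1, hi2⟩ := Finset.mem_Ioc.mp hiR
    have hz1 : 0 < z.1 := hSpos i' hiR z hz
    have hc' : 0 < c i' hiR + z.1 := by linarith [hC i' hiR]
    have hq := quad_isLeast (c i' hiR + z.1) (2*(b i' hiR)*y + (q1 i' hiR + z.2.1))
      ((a i' hiR)*y^2 + (q0 i' hiR)*y + (r i' hiR + z.2.2)) hc'
    obtain ⟨t0, ht0⟩ := hq.1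
    have hMval : M = (c i' hiR + z.1)*t0^2 + (2*(b i' hiR)*y + (q1 i' hiR + z.2.1))*t0
        + ((a i' hiR)*y^2 + (q0 i' hiR)*y + (r i' hiR + z.2.2)) := by
      rw [hM, hxe, ← ht0, ← reduce_eq _ _ _ _ _ _ y hc']
    have hv0U : (l i i' y t0 + bellmanV N l i' (m+1) t0) ∈
        {v : ℝ | ∃ i' : ℕ, i < i' ∧ i' ≤ N - (m + 2) + 1 ∧
          ∃ y' : ℝ, v = l i i' y y' + bellmanV N l i' (m + 1) y'} :=
      ⟨i', hi1, hi2, t0, rfl⟩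
    have hv0le : l i i' y t0 + bellmanV N l i' (m+1) t0 ≤ M := by
      have h1 := hVle i' hiR t0 z hz
      have h2 : l i i' y t0 + (z.1*t0^2 + z.2.1*t0 + z.2.2)
          = (c i' hiR + z.1)*t0^2 + (2*(b i' hiR)*y + (q1 i' hiR + z.2.1))*t0
            + ((a i' hiR)*y^2 + (q0 i' hiR)*y + (r i' hiR + z.2.2)) := by
        rw [hl' i' hiR y t0]; ring
      rw [hMval]
      linarith
    have : l i i' y t0 + bellmanV N l i' (m+1) t0 = M :=
      le_antisymm hv0le (hlb _ hv0U)
    rw [← this]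
    exact hv0U
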